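/- Let C \subseteq F_2^n be a binary orthogonal array of strength 2 and cardinality |C| \ge 2, with n \ge 3. Suppose every point y where the covering radius \rho(C) is attained has its antipode in C (i.e., t_1(y) = -1). Then \rho(C) \ge (|C| - 2)/((n-2)|C| + 2). -/

import Mathlib

noncomputable def rchoose (z : ℝ) (j : ℕ) : ℝ :=
  (∏ t ∈ Finset.range j, (z - t)) / (Nat.factorial j)

/-- Binary Krawtchouk polynomial `K_i^{(n)}(z)`. -/
noncomputable def Kr (n i : ℕ) (z : ℝ) : ℝ :=
  ∑ j ∈ Finset.range (i + 1), (-1 : ℝ) ^ j * rchoose z j * rchoose ((n : ℝ) - z) (i - j)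

/-- Normalized Krawtchouk polynomial `Q_i(t) = K_i^{(n)}(n(1-t)/2)/binom(n,i)`. -/
noncomputable def Qn (n i : ℕ) (t : ℝ) : ℝ :=
  Kr n i ((n : ℝ) * (1 - t) / 2) / (n.choose i : ℝ)

/-- The point `t_m = -1 + 2m/n`. -/
noncomputable def tpt (n m : ℕ) : ℝ := -1 + 2 * (m : ℝ) / (n : ℝ)

/-- Integral of `f` with respect to the measure `μ_n = 2^{-n} ∑ binom(n,i) δ_{t_i}`. -/
noncomputable def muInt (n : ℕ) (f : ℝ → ℝ) : ℝ :=
  ((2 : ℝ) ^ n)⁻¹ * ∑ i ∈ Finset.range (n + 1), (n.choose i : ℝ) * f (tpt n i)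
/-- `C` is a binary orthogonal array of length `n` and strength `τ`: every projection
onto `τ` coordinates takes each value equally often. -/
def IsOA (n τ : ℕ) (C : Finset (Fin n → ZMod 2)) : Prop :=
  ∀ S : Finset (Fin n), S.card = τ → ∀ v : Fin n → ZMod 2,
    (C.filter fun x => ∀ i ∈ S, x i = v i).card * 2 ^ τ = C.card

/-- `⟨x,y⟩ = 1 - 2 d(x,y)/n`. -/
noncomputable def inn (n : ℕ) (x y : Fin n → ZMod 2) : ℝ :=
  1 - 2 * (hammingDist x y : ℝ) / (n : ℝ)

/-- Covering radius `ρ(C) = min_y max_{x ∈ C} ⟨x,y⟩`. -/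
noncomputable def covRad (n : ℕ) (C : Finset (Fin n → ZMod 2)) (hC : C.Nonempty) : ℝ :=
  Finset.univ.inf' Finset.univ_nonempty (fun y => C.sup' hC fun x => inn n x y)

lemma pair_count {n : ℕ} {C : Finset (Fin n → ZMod 2)} (hOA : IsOA n 2 C)
    {i j : Fin n} (hij : i ≠ j) (a b : ZMod 2) :
    (C.filter fun x => x i = a ∧ x j = b).card * 4 = C.card := by
  have hcard : ({i, j} : Finset (Fin n)).card = 2 := by
    rw [Finset.card_insert_of_notMem (by simpa using hij), Finset.card_singleton]
  have h := hOA {i, j} hcard (fun k => if k = i then a else b)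
  have he : (C.filter fun x => ∀ k ∈ ({i, j} : Finset (Fin n)), x k = if k = i then a else b)
      = C.filter fun x => x i = a ∧ x j = b := by
    apply Finset.filter_congr
    intro x _
    constructor
    · intro hx
      refine ⟨by simpa using hx i (by simp), ?_⟩
      have := hx j (by simp)
      simpa [hij.symm] using this
    · intro hx k hk
      rcases Finset.mem_insert.mp hk with rfl | hk
      · simpa using hx.1
      · rw [Finset.mem_singleton] at hk; subst hk
        simpa [hij.symm] using hx.2
  rw [he] at h
  simpa using h

lemma single_count {n : ℕ} {C : Finset (Fin n → ZMod 2)} (hOA : IsOA n 2 C)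
    (hn : 2 ≤ n) (i : Fin n) (a : ZMod 2) :
    (C.filter fun x => x i = a).card * 2 = C.card := by
  -- find j ≠ i
  have : Nontrivial (Fin n) := Fin.nontrivial_iff_two_le.mpr hn
  obtain ⟨j, hj⟩ := exists_ne i
  have h0 := pair_count hOA (Ne.symm hj) a 0
  have h1 := pair_count hOA (Ne.symm hj) a 1
  have hsplit : (C.filter fun x => x i = a).card
      = (C.filter fun x => x i = a ∧ x j = 0).card
        + (C.filter fun x => x i = a ∧ x j = 1).card := by
    rw [Finset.card_filter, Finset.card_filter, Finset.card_filter,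
      ← Finset.sum_add_distrib]
    apply Finset.sum_congr rfl
    intro x _
    have h2 : x j = 0 ∨ x j = 1 := by
      have : ∀ c : ZMod 2, c = 0 ∨ c = 1 := by decide
      exact this _
    rcases h2 with h | h <;> split_ifs <;> simp_all
  have hAB : (C.filter fun x => x i = a ∧ x j = 0).card
      = (C.filter fun x => x i = a ∧ x j = 1).card :=
    Nat.eq_of_mul_eq_mul_right (by norm_num) (h0.trans h1.symm)
  rw [hsplit, hAB, ← h1]
  ring

lemma ne_iff_zmod2 : ∀ a b : ZMod 2, a ≠ b ↔ a = b + 1 := by decide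

lemma mom1 {n : ℕ} {C : Finset (Fin n → ZMod 2)} (hOA : IsOA n 2 C)
    (hn : 2 ≤ n) (y : Fin n → ZMod 2) :
    (∑ x ∈ C, hammingDist x y) * 2 = n * C.card := by
  have hd : ∀ x : Fin n → ZMod 2, hammingDist x y
      = ∑ i : Fin n, if x i ≠ y i then 1 else 0 := by
    intro x
    rw [hammingDist, Finset.card_filter]
  calc (∑ x ∈ C, hammingDist x y) * 2
      = ∑ i : Fin n, (C.filter fun x => x i = y i + 1).card * 2 := by
        rw [← Finset.sum_mul]
        congr 1
        simp_rw [hd]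
        rw [Finset.sum_comm]
        apply Finset.sum_congr rfl
        intro i _
        rw [Finset.card_filter]
        apply Finset.sum_congr rfl
        intro x _
        simp [ne_iff_zmod2]
    _ = n * C.card := by
        rw [Finset.sum_congr rfl fun i _ => single_count hOA hn i (y i + 1)]
        simp [mul_comm]

lemma mom2 {n : ℕ} {C : Finset (Fin n → ZMod 2)} (hOA : IsOA n 2 C)
    (hn : 2 ≤ n) (y : Fin n → ZMod 2) :
    (∑ x ∈ C, hammingDist x y * hammingDist x y) * 4 = n * (n + 1) * C.card := by
  have hd : ∀ x : Fin n → ZMod 2, hammingDist x y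
      = ∑ i : Fin n, if x i = y i + 1 then 1 else 0 := by
    intro x
    rw [hammingDist, Finset.card_filter]
    apply Finset.sum_congr rfl
    intro i _
    simp [ne_iff_zmod2]
  have key : ∑ x ∈ C, hammingDist x y * hammingDist x y
      = ∑ i : Fin n, ∑ j : Fin n,
          (C.filter fun x => x i = y i + 1 ∧ x j = y j + 1).card := by
    simp_rw [hd, Finset.sum_mul_sum]
    rw [Finset.sum_comm]
    apply Finset.sum_congr rfl
    intro i _
    rw [Finset.sum_comm]
    apply Finset.sum_congr rfl
    intro j _
    rw [Finset.card_filter]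
    apply Finset.sum_congr rfl
    intro x _
    split_ifs with h1 h2 h3 <;> simp_all
  rw [key, Finset.sum_mul]
  have hrow : ∀ i : Fin n,
      (∑ j : Fin n, (C.filter fun x => x i = y i + 1 ∧ x j = y j + 1).card) * 4
      = (n + 1) * C.card := by
    intro i
    rw [Finset.sum_mul]
    have hterm : ∀ j : Fin n,
        (C.filter fun x => x i = y i + 1 ∧ x j = y j + 1).card * 4
        = C.card + if j = i then C.card else 0 := by
      intro j
      by_cases hji : j = i
      · subst hji
        have : (C.filter fun x => x j = y j + 1 ∧ x j = y j + 1)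
            = C.filter fun x => x j = y j + 1 := by
          apply Finset.filter_congr; intro x _; simp
        rw [this, if_pos rfl, ← single_count hOA hn j (y j + 1)]
        ring
      · rw [pair_count hOA (fun h => hji h.symm) _ _, if_neg hji, add_zero]
    rw [Finset.sum_congr rfl fun j _ => hterm j, Finset.sum_add_distrib]
    simp [Finset.sum_ite_eq, mul_comm, add_mul, add_comm]
  rw [Finset.sum_congr rfl fun i _ => hrow i]
  simp [mul_assoc, mul_comm]

set_option maxHeartbeats 1000000 in
/-- Case `t_1(y) = -1` for all points attaining the covering radius: LP bound for
strength-2 orthogonal arrays depending on the cardinality. -/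
theorem covering_radius_strength2_antipodal_bound (n : ℕ) (hn : 3 ≤ n)
    (C : Finset (Fin n → ZMod 2)) (hC : C.Nonempty) (hcard : 2 ≤ C.card)
    (hOA : IsOA n 2 C)
    (hant : ∀ y : Fin n → ZMod 2,
      (C.sup' hC fun x => inn n x y) = covRad n C hC → (fun i => y i + 1) ∈ C) :
    ((C.card : ℝ) - 2) / (((n : ℝ) - 2) * (C.card : ℝ) + 2) ≤ covRad n C hC := by
  have hn2 : 2 ≤ n := by omega
  have hn0 : (0 : ℝ) < n := by positivity
  have hM2 : (2 : ℝ) ≤ (C.card : ℝ) := by exact_mod_cast hcard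
  have hn3 : (3 : ℝ) ≤ (n : ℝ) := by exact_mod_cast hn
  -- pick an optimal y
  obtain ⟨y, -, hy⟩ := Finset.exists_mem_eq_inf' (Finset.univ_nonempty)
    (fun y : Fin n → ZMod 2 => C.sup' hC fun x => inn n x y)
  have hy' : covRad n C hC = C.sup' hC fun x => inn n x y := hy
  set s := covRad n C hC with hs
  set M := (C.card : ℝ) with hM
  -- the antipode
  set x' : Fin n → ZMod 2 := fun i => y i + 1 with hx'def
  have hx'C : x' ∈ C := hant y hy'.symm
  have hone : ∀ a : ZMod 2, a + 1 ≠ a := by decide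
  have hdx' : hammingDist x' y = n := by
    rw [hammingDist]
    rw [Finset.filter_true_of_mem (fun i _ => hone (y i))]
    simp
  have htx' : inn n x' y = -1 := by
    rw [inn, hdx', mul_div_assoc, div_self hn0.ne']
    ring
  -- moments
  have hD1 : (∑ x ∈ C, (hammingDist x y : ℝ)) * 2 = n * M := by
    rw [hM]
    exact_mod_cast mom1 hOA hn2 y
  have hD2 : (∑ x ∈ C, (hammingDist x y : ℝ) * (hammingDist x y : ℝ)) * 4
      = n * (n + 1) * M := by
    rw [hM]
    exact_mod_cast mom2 hOA hn2 y
  -- real moments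
  have hPn : (∑ x ∈ C, inn n x y) * n = 0 := by
    rw [Finset.sum_mul]
    have hterm : ∀ x ∈ C, inn n x y * n
        = (n : ℝ) - 2 * (hammingDist x y : ℝ) := by
      intro x _
      rw [inn]
      field_simp
      try ring
    rw [Finset.sum_congr rfl hterm, Finset.sum_sub_distrib, Finset.sum_const,
      ← Finset.mul_sum, nsmul_eq_mul, ← hM]
    linear_combination -hD1
  have hP : ∑ x ∈ C, inn n x y = 0 := by
    rcases mul_eq_zero.mp hPn with h | h
    · exact h
    · exact absurd h hn0.ne'
  have hQ2 : (∑ x ∈ C, (inn n x y) ^ 2) * (n : ℝ) ^ 2 = (n : ℝ) * M := by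
    rw [Finset.sum_mul]
    have hterm : ∀ x ∈ C, (inn n x y) ^ 2 * (n : ℝ) ^ 2
        = (n : ℝ) ^ 2 - 4 * (n : ℝ) * (hammingDist x y : ℝ)
          + 4 * ((hammingDist x y : ℝ) * (hammingDist x y : ℝ)) := by
      intro x _
      rw [inn]
      field_simp
      try ring
    rw [Finset.sum_congr rfl hterm, Finset.sum_add_distrib, Finset.sum_sub_distrib,
      Finset.sum_const, ← Finset.mul_sum, ← Finset.mul_sum, nsmul_eq_mul, ← hM]
    linear_combination (-2 * (n : ℝ)) * hD1 + hD2
  have hQ : (∑ x ∈ C, (inn n x y) ^ 2) * (n : ℝ) = M := by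
    have : ((∑ x ∈ C, (inn n x y) ^ 2) * (n : ℝ)) * n = M * n := by
      rw [mul_comm M]
      rw [← hQ2]
      ring
    exact mul_right_cancel₀ hn0.ne' this
  -- the quadratic inequality
  set ℓ : ℝ := -1 + 2 / (n : ℝ) with hℓ
  have hSsplit : ∑ x ∈ C, (inn n x y - ℓ) * (inn n x y - s)
      = (inn n x' y - ℓ) * (inn n x' y - s)
        + ∑ x ∈ C.erase x', (inn n x y - ℓ) * (inn n x y - s) :=
    (Finset.add_sum_erase C _ hx'C).symm
  have hub : ∀ x ∈ C.erase x', (inn n x y - ℓ) * (inn n x y - s) ≤ 0 := by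
    intro x hx
    have hxC : x ∈ C := Finset.mem_of_mem_erase hx
    have hxne : x ≠ x' := Finset.ne_of_mem_erase hx
    have hle : inn n x y ≤ s := by
      rw [hy']
      exact Finset.le_sup' (fun x => inn n x y) hxC
    have hge : ℓ ≤ inn n x y := by
      -- x ≠ antipode, so some coordinate agrees, distance ≤ n - 1
      have hex : ∃ i, x i = y i := by
        by_contra hcon
        push_neg at hcon
        apply hxne
        funext i
        have := (ne_iff_zmod2 (x i) (y i)).mp (hcon i)
        simpa [hx'def] using this
      obtain ⟨i, hi⟩ := hex
      have hdle : hammingDist x y ≤ n - 1 := by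
        rw [hammingDist]
        have hsub : (Finset.univ.filter fun j => x j ≠ y j) ⊆ Finset.univ.erase i := by
          intro j hj
          rw [Finset.mem_filter] at hj
          rw [Finset.mem_erase]
          exact ⟨fun h => hj.2 (h ▸ hi), Finset.mem_univ j⟩
        calc (Finset.univ.filter fun j => x j ≠ y j).card
            ≤ (Finset.univ.erase i).card := Finset.card_le_card hsub
          _ = n - 1 := by rw [Finset.card_erase_of_mem (Finset.mem_univ i)]; simp
      have hdR : (hammingDist x y : ℝ) ≤ (n : ℝ) - 1 := by
        have : (hammingDist x y : ℝ) ≤ ((n - 1 : ℕ) : ℝ) := by exact_mod_cast hdle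
        calc (hammingDist x y : ℝ) ≤ ((n - 1 : ℕ) : ℝ) := this
          _ ≤ (n : ℝ) - 1 := by
            rw [Nat.cast_sub (by omega)]
            simp
      rw [hℓ, inn]
      have key : 1 - 2 * (hammingDist x y : ℝ) / n - (-1 + 2 / n)
          = (2 * ((n : ℝ) - 1) - 2 * (hammingDist x y : ℝ)) / n := by
        field_simp
        ring
      nlinarith [div_nonneg (by linarith : (0:ℝ) ≤ 2 * ((n : ℝ) - 1)
        - 2 * (hammingDist x y : ℝ)) hn0.le, key]
    exact mul_nonpos_of_nonneg_of_nonpos (by linarith) (by linarith)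
  have hsum_ub : ∑ x ∈ C, (inn n x y - ℓ) * (inn n x y - s)
      ≤ (-1 - ℓ) * (-1 - s) := by
    rw [hSsplit, htx']
    have := Finset.sum_nonpos hub
    linarith
  -- expand the sum
  have hexp : ∑ x ∈ C, (inn n x y - ℓ) * (inn n x y - s)
      = (∑ x ∈ C, (inn n x y) ^ 2) - (ℓ + s) * (∑ x ∈ C, inn n x y) + ℓ * s * M := by
    have hterm : ∀ x ∈ C, (inn n x y - ℓ) * (inn n x y - s)
        = (inn n x y) ^ 2 - (ℓ + s) * inn n x y + ℓ * s := by
      intro x _; ring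
    rw [Finset.sum_congr rfl hterm, Finset.sum_add_distrib, Finset.sum_sub_distrib,
      ← Finset.mul_sum, Finset.sum_const, nsmul_eq_mul, ← hM]
    ring
  rw [hexp, hP, mul_zero, sub_zero] at hsum_ub
  -- final algebra
  have hden : (0 : ℝ) < ((n : ℝ) - 2) * M + 2 := by nlinarith
  rw [div_le_iff₀ hden]
  have hmul := mul_le_mul_of_nonneg_right hsum_ub hn0.le
  have hℓn : ℓ * n = 2 - (n : ℝ) := by
    rw [hℓ]; field_simp; ring
  have e : ((∑ x ∈ C, (inn n x y) ^ 2) + ℓ * s * M) * n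
      = M + (2 - (n : ℝ)) * (s * M) := by
    linear_combination s * M * hℓn + hQ
  have e2 : (-1 - ℓ) * (-1 - s) * n = 2 + 2 * s := by
    linear_combination (1 + s) * hℓn
  nlinarith [hmul, e, e2]
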